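/- arXiv:2212.14860 — 2 statements merged into one kernel-verified Lean document; each statement's English description precedes it below -/
import Mathlib

section
/- For every n ≥ 2 there is a 2-colouring of the edges of the complete graph on 9n vertices with colours red and blue containing no monochromatic copy of P_{3n+2}^2. Explicitly, one may take disjoint sets X_1,X_2,Y_1,Y_2 of size 2n, a set Z of size n−1 and one extra vertex z; colour all edges inside X_1 and inside X_2 blue, all edges inside Y_1 and inside Y_2 red, all edges in (X_1,X_2), (X_1,Z), (X_2,Z), (X_1,Y_2), (X_2,Y_1) red, all edges in (Y_1,Y_2), (Y_1,Z), (Y_2,Z), (X_1,Y_1), (X_2,Y_2) blue, all edges from z to X_1∪X_2 blue and from z to Y_1∪Y_2 red, and colour the edges inside Z∪{z} arbitrarily. -/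
/-!
Common definitions.  Colour convention for 2-edge-colourings `c : Sym2 V → Bool`:
`true` = red, `false` = blue.  For 3-colourings by `Fin 3`: `0` = red, `1` = blue,
`2` = purple.
-/

/-- The square of the path on `k` vertices: `i` and `j` are adjacent iff `1 ≤ |i - j| ≤ 2`. -/
def pathSq (k : ℕ) : SimpleGraph (Fin k) where
  Adj i j := i ≠ j ∧ i.val ≤ j.val + 2 ∧ j.val ≤ i.val + 2
  symm := by
    constructor
    rintro i j ⟨h1, h2, h3⟩
    exact ⟨h1.symm, h3, h2⟩
  loopless := by
    constructor
    rintro i ⟨h, -⟩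
    exact h rfl

/-- The square of the cycle on `k` vertices: vertices at (cyclic) distance `1` or `2`
are adjacent. -/
def cycleSq (k : ℕ) : SimpleGraph (ZMod k) where
  Adj i j := i ≠ j ∧ (j = i + 1 ∨ j = i + 2 ∨ i = j + 1 ∨ i = j + 2)
  symm := by
    constructor
    rintro i j ⟨h1, h2⟩
    exact ⟨h1.symm, by tauto⟩
  loopless := by
    constructor
    rintro i ⟨h, -⟩
    exact h rfl

/-- A 2-edge-coloured complete graph (with colouring `c`) contains a monochromatic copy
of the graph `H`. -/
def HasMonoCopy {W V : Type*} (H : SimpleGraph W) (c : Sym2 V → Bool) : Prop :=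
  ∃ (b : Bool) (f : W ↪ V), ∀ u v : W, H.Adj u v → c s(f u, f v) = b

/-- The subgraph of a 2-edge-coloured graph consisting of the edges of colour `b`. -/
def colourSubgraph {V : Type*} (G : SimpleGraph V) (c : Sym2 V → Bool) (b : Bool) :
    SimpleGraph V where
  Adj u v := G.Adj u v ∧ c s(u, v) = b
  symm := by
    constructor
    rintro u v ⟨h1, h2⟩
    exact ⟨h1.symm, by rwa [Sym2.eq_swap]⟩
  loopless := by
    constructor
    rintro u ⟨h, -⟩
    exact G.irrefl h

/-- Two edges are directly triangle-connected: they share a vertex and the two remaining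
endpoints are adjacent. -/
def EdgeTriangleAdj {V : Type*} (G : SimpleGraph V) (e f : Sym2 V) : Prop :=
  ∃ u v w, G.Adj u v ∧ G.Adj u w ∧ G.Adj v w ∧ e = s(u, v) ∧ f = s(u, w)

/-- Triangle-connectedness of edges: the reflexive-transitive closure of direct
triangle-connectedness.  Two edges lie in the same triangle component iff they are
triangle-connected. -/
def TriangleConnected {V : Type*} (G : SimpleGraph V) (e f : Sym2 V) : Prop :=
  Relation.ReflTransGen (EdgeTriangleAdj G) e f

/-- `t` is (the vertex set of) a triangle of `G`. -/
def IsTriangle {V : Type*} [DecidableEq V] (G : SimpleGraph V) (t : Finset V) : Prop :=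
  ∃ u v w, G.Adj u v ∧ G.Adj u w ∧ G.Adj v w ∧ t = {u, v, w}

/-- `e` is an edge inside the vertex set `t`. -/
def EdgeOf {V : Type*} (t : Finset V) (e : Sym2 V) : Prop := ∀ x ∈ e, x ∈ t

/-- `T` is a triangle-connected triangle factor (TCTF) of `G`: a collection of pairwise
vertex-disjoint triangles of `G` all of whose edges lie in a single triangle component. -/
def IsTCTF {V : Type*} [DecidableEq V] (G : SimpleGraph V) (T : Finset (Finset V)) : Prop :=
  (∀ t ∈ T, IsTriangle G t) ∧
  ((T : Set (Finset V)).Pairwise Disjoint) ∧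
  (∀ t ∈ T, ∀ t' ∈ T, ∀ e ∈ G.edgeSet, ∀ f ∈ G.edgeSet,
    EdgeOf t e → EdgeOf t' f → TriangleConnected G e f)

/-- The 2-edge-coloured graph `(G, c)` has a monochromatic TCTF on at least `s` vertices. -/
def HasMonoTCTF {V : Type*} [DecidableEq V] (G : SimpleGraph V) (c : Sym2 V → Bool)
    (s : ℝ) : Prop :=
  ∃ (b : Bool) (T : Finset (Finset V)),
    IsTCTF (colourSubgraph G c b) T ∧ s ≤ ((T.biUnion id).card : ℝ)

/-- The degree of `v` in `G`. -/
noncomputable def gdeg {V : Type*} (G : SimpleGraph V) (v : V) : ℕ :=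
  {u | G.Adj v u}.ncard

/-- `v` is `r`-`b` to `A`: `va` is an edge of colour `b` for all but at most `r` of the
vertices `a ∈ A`. -/
def VertexRColour {V K : Type*} (G : SimpleGraph V) (c : Sym2 V → K) (b : K) (r : ℝ)
    (v : V) (A : Finset V) : Prop :=
  ({a ∈ (A : Set V) | ¬(G.Adj v a ∧ c s(v, a) = b)}.ncard : ℝ) ≤ r

/-- The pair `(A, B)` is `r`-`b`: all but at most `r` vertices of `A` are `r`-`b` to `B`
and vice versa. -/
def PairRColour {V K : Type*} (G : SimpleGraph V) (c : Sym2 V → K) (b : K) (r : ℝ)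
    (A B : Finset V) : Prop :=
  ({a ∈ (A : Set V) | ¬VertexRColour G c b r a B}.ncard : ℝ) ≤ r ∧
  ({a ∈ (B : Set V) | ¬VertexRColour G c b r a A}.ncard : ℝ) ≤ r

/-- `M` is a matching of `G` (a set of pairwise vertex-disjoint edges of `G`). -/
def IsMatching' {V : Type*} (G : SimpleGraph V) (M : Finset (Sym2 V)) : Prop :=
  (∀ e ∈ M, e ∈ G.edgeSet) ∧
  ((M : Set (Sym2 V)).Pairwise fun e f => ∀ x, x ∈ e → x ∉ f)

/-- `M` is a connected matching of `G`: a matching all of whose edges lie in the same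
connected component of `G`. -/
def IsConnMatching {V : Type*} (G : SimpleGraph V) (M : Finset (Sym2 V)) : Prop :=
  IsMatching' G M ∧ ∀ e ∈ M, ∀ f ∈ M, ∀ u v : V, u ∈ e → v ∈ f → G.Reachable u v

/-- The number of neighbours of `v` (in the graph `G`) inside `A`. -/
noncomputable def nbrCountIn {V : Type*} (G : SimpleGraph V) (v : V) (A : Finset V) : ℕ :=
  {a ∈ (A : Set V) | G.Adj v a}.ncard

/-- In a colouring of a complete graph, the number of `b`-coloured neighbours of `v`
inside `A`. -/
noncomputable def colourNbrCount {V : Type*} (c : Sym2 V → Bool) (b : Bool) (v : V)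
    (A : Finset V) : ℕ :=
  {a ∈ (A : Set V) | a ≠ v ∧ c s(v, a) = b}.ncard

/-- Every vertex of `A` has at most `r` `b`-coloured neighbours in `B` and vice versa
(for a colouring of a complete graph). -/
def PairFewColour {V : Type*} (c : Sym2 V → Bool) (b : Bool) (r : ℝ) (A B : Finset V) :
    Prop :=
  (∀ v ∈ A, (colourNbrCount c b v B : ℝ) ≤ r) ∧
  (∀ v ∈ B, (colourNbrCount c b v A : ℝ) ≤ r)

/-- The number of edges of `G` with one endpoint in `A` and the other in `B`. -/
noncomputable def edgesBetween {V : Type*} (G : SimpleGraph V) (A B : Finset V) : ℕ :=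
  {e ∈ G.edgeSet | ∃ a ∈ A, ∃ b ∈ B, e = s(a, b)}.ncard

/-- Two cliques of `G'` (each with at least two vertices) are triangle-connected in `G'`:
some edge of one is triangle-connected to some edge of the other. -/
def CliquesTC {V : Type*} (G' : SimpleGraph V) (C C' : Finset V) : Prop :=
  ∃ u v w x, u ∈ C ∧ v ∈ C ∧ w ∈ C' ∧ x ∈ C' ∧ G'.Adj u v ∧ G'.Adj w x ∧
    TriangleConnected G' s(u, v) s(w, x)

/-- The parameter `m = |log ε| / 4` of the Setting. -/
noncomputable def mval (ε : ℝ) : ℝ := |Real.log ε| / 4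

/-- A clique decomposition of the 2-edge-coloured graph `(G, c)` with parameters `ε`, `t`
(the Setting of the paper): a partition of `V(G)` into a small set `Vbin` together with a
collection `cliques` of monochromatic cliques (`col K` is the colour of the clique `K`),
each of size between `2` and `m = |log ε|/4`, with at most `9t/m` cliques, such that each
vertex of a clique of colour `b` sends at most `20t/√m` edges of colour `b` to vertices
in cliques of colour `b` not `b`-triangle-connected to its own clique, and, for every
`k ≥ 1`, at most `400kt/|log ε|^{3/2}` of the cliques have fewer than `(1 - 1/k)m`
vertices. -/
def IsCliqueDecomp {V : Type*} [Fintype V] [DecidableEq V] (G : SimpleGraph V)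
    (c : Sym2 V → Bool) (ε t : ℝ) (Vbin : Finset V) (cliques : Finset (Finset V))
    (col : Finset V → Bool) : Prop :=
  (∀ K ∈ cliques, Disjoint K Vbin) ∧
  ((cliques : Set (Finset V)).Pairwise Disjoint) ∧
  (Vbin ∪ cliques.biUnion id = Finset.univ) ∧
  ((Vbin.card : ℝ) ≤ Real.sqrt ε * t + 40 * t / Real.sqrt (mval ε)) ∧
  ((cliques.card : ℝ) ≤ 9 * t / mval ε) ∧
  (∀ K ∈ cliques, 2 ≤ K.card ∧ (K.card : ℝ) ≤ mval ε ∧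
    ∀ u ∈ K, ∀ v ∈ K, u ≠ v → G.Adj u v ∧ c s(u, v) = col K) ∧
  (∀ b : Bool, ∀ C ∈ cliques, col C = b → ∀ u ∈ C,
    ({v | ∃ C' ∈ cliques, col C' = b ∧ v ∈ C' ∧
        ¬CliquesTC (colourSubgraph G c b) C C' ∧
        (colourSubgraph G c b).Adj u v}.ncard : ℝ) ≤ 20 * t / Real.sqrt (mval ε)) ∧
  (∀ k : ℕ, 1 ≤ k →
    ({K ∈ (cliques : Set (Finset V)) | (K.card : ℝ) < (1 - 1 / (k : ℝ)) * mval ε}.ncard : ℝ)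
      ≤ 400 * k * t / Real.sqrt (|Real.log ε| ^ 3))

/-- Recolour the purple (`2`) edges of a 3-colouring by red (`true`) or blue (`false`),
producing a 2-colouring (`true` = red, `false` = blue). -/
def recolourPurple {V : Type*} (c : Sym2 V → Fin 3) (b : Bool) : Sym2 V → Bool :=
  fun e => if c e = 2 then b else decide (c e = 0)


lemma core_P3n2 (n : ℕ) (hn : 2 ≤ n)
    (A1 A2 B1 B2 Z : Finset (Fin (9 * n))) (z : Fin (9 * n))
    (dA1A2 : Disjoint A1 A2) (dA1B1 : Disjoint A1 B1) (dA2B2 : Disjoint A2 B2)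
    (dB1B2 : Disjoint B1 B2) (dB1Z : Disjoint B1 Z) (dB2Z : Disjoint B2 Z)
    (dZz : z ∉ Z)
    (hB1 : B1.card = 2 * n) (hB2 : B2.card = 2 * n) (hZ : Z.card = n - 1)
    (hcov : ∀ x : Fin (9 * n), x ∈ A1 ∨ x ∈ A2 ∨ x ∈ B1 ∨ x ∈ B2 ∨ x ∈ Z ∨ x = z)
    (c : Sym2 (Fin (9 * n)) → Bool) (b : Bool)
    (nA1 : ∀ u ∈ A1, ∀ v ∈ A1, u ≠ v → c s(u, v) ≠ b)
    (nA2 : ∀ u ∈ A2, ∀ v ∈ A2, u ≠ v → c s(u, v) ≠ b)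
    (nB12 : ∀ u ∈ B1, ∀ v ∈ B2, c s(u, v) ≠ b)
    (nB1Z : ∀ u ∈ B1, ∀ v ∈ Z, c s(u, v) ≠ b)
    (nB2Z : ∀ u ∈ B2, ∀ v ∈ Z, c s(u, v) ≠ b)
    (nA1B1 : ∀ u ∈ A1, ∀ v ∈ B1, c s(u, v) ≠ b)
    (nA2B2 : ∀ u ∈ A2, ∀ v ∈ B2, c s(u, v) ≠ b)
    (nzA1 : ∀ v ∈ A1, c s(z, v) ≠ b)
    (nzA2 : ∀ v ∈ A2, c s(z, v) ≠ b)
    (w : ℕ → Fin (9 * n))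
    (winj : ∀ i j, i < 3 * n + 2 → j < 3 * n + 2 → w i = w j → i = j)
    (hcb : ∀ i j, i < j → j ≤ i + 2 → j < 3 * n + 2 → c s(w i, w j) = b) :
    False := by
  classical
  have wne : ∀ i j, i < 3*n+2 → j < 3*n+2 → i ≠ j → w i ≠ w j :=
    fun i j hi hj hij h => hij (winj i j hi hj h)
  -- no b-edge within insert z A1 / insert z A2
  have noeA1z : ∀ u v : Fin (9*n), (u ∈ A1 ∨ u = z) → (v ∈ A1 ∨ v = z) → u ≠ v →
      c s(u, v) ≠ b := by
    rintro u v (hu | rfl) (hv | rfl) hne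
    · exact nA1 u hu v hv hne
    · intro h; exact nzA1 u hu (by rwa [Sym2.eq_swap] at h)
    · exact nzA1 v hv
    · exact absurd rfl hne
  have noeA2z : ∀ u v : Fin (9*n), (u ∈ A2 ∨ u = z) → (v ∈ A2 ∨ v = z) → u ≠ v →
      c s(u, v) ≠ b := by
    rintro u v (hu | rfl) (hv | rfl) hne
    · exact nA2 u hu v hv hne
    · intro h; exact nzA2 u hu (by rwa [Sym2.eq_swap] at h)
    · exact nzA2 v hv
    · exact absurd rfl hne
  -- zone intersections
  have cap01 : ∀ x : Fin (9*n), (x ∈ A1 ∨ x ∈ A2 ∨ x ∈ Z ∨ x = z) →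
      (x ∈ B1 ∨ x ∈ A2 ∨ x = z) → (x ∈ A2 ∨ x = z) := by
    rintro x h0 (h | h | h)
    · rcases h0 with h' | h' | h' | h'
      · exact absurd h (Finset.disjoint_left.mp dA1B1 h')
      · exact Or.inl h'
      · exact absurd h' (Finset.disjoint_left.mp dB1Z h)
      · exact Or.inr h'
    · exact Or.inl h
    · exact Or.inr h
  have cap02 : ∀ x : Fin (9*n), (x ∈ A1 ∨ x ∈ A2 ∨ x ∈ Z ∨ x = z) →
      (x ∈ B2 ∨ x ∈ A1 ∨ x = z) → (x ∈ A1 ∨ x = z) := by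
    rintro x h0 (h | h | h)
    · rcases h0 with h' | h' | h' | h'
      · exact Or.inl h'
      · exact absurd h (Finset.disjoint_left.mp dA2B2 h')
      · exact absurd h' (Finset.disjoint_left.mp dB2Z h)
      · exact Or.inr h'
    · exact Or.inl h
    · exact Or.inr h
  have cap12 : ∀ x : Fin (9*n), (x ∈ B1 ∨ x ∈ A2 ∨ x = z) →
      (x ∈ B2 ∨ x ∈ A1 ∨ x = z) → x = z := by
    rintro x (h | h | h) (h' | h' | h')
    · exact absurd h' (Finset.disjoint_left.mp dB1B2 h)
    · exact absurd h (Finset.disjoint_left.mp dA1B1 h')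
    · exact h'
    · exact absurd h' (Finset.disjoint_left.mp dA2B2 h)
    · exact absurd h (Finset.disjoint_left.mp dA1A2 h')
    · exact h'
    · exact h
    · exact h
    · exact h
  -- exclusion lemmas
  have ex01 : ∀ u v : Fin (9*n), u ≠ v → c s(u,v) = b →
      (u ∈ A1 ∨ u ∈ A2 ∨ u ∈ Z ∨ u = z) → (v ∈ A1 ∨ v ∈ A2 ∨ v ∈ Z ∨ v = z) →
      (u ∈ B1 ∨ u ∈ A2 ∨ u = z) → (v ∈ B1 ∨ v ∈ A2 ∨ v = z) → False :=
    fun u v hne he h0u h0v h1u h1v =>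
      noeA2z u v (cap01 u h0u h1u) (cap01 v h0v h1v) hne he
  have ex02 : ∀ u v : Fin (9*n), u ≠ v → c s(u,v) = b →
      (u ∈ A1 ∨ u ∈ A2 ∨ u ∈ Z ∨ u = z) → (v ∈ A1 ∨ v ∈ A2 ∨ v ∈ Z ∨ v = z) →
      (u ∈ B2 ∨ u ∈ A1 ∨ u = z) → (v ∈ B2 ∨ v ∈ A1 ∨ v = z) → False :=
    fun u v hne he h0u h0v h2u h2v =>
      noeA1z u v (cap02 u h0u h2u) (cap02 v h0v h2v) hne he
  have ex12 : ∀ u v : Fin (9*n), u ≠ v → c s(u,v) = b →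
      (u ∈ B1 ∨ u ∈ A2 ∨ u = z) → (v ∈ B1 ∨ v ∈ A2 ∨ v = z) →
      (u ∈ B2 ∨ u ∈ A1 ∨ u = z) → (v ∈ B2 ∨ v ∈ A1 ∨ v = z) → False :=
    fun u v hne _ h1u h1v h2u h2v =>
      hne ((cap12 u h1u h2u).trans (cap12 v h1v h2v).symm)
  -- neighbours of B1 / B2 vertices
  have nbrB1 : ∀ u ∈ B1, ∀ v : Fin (9*n), c s(u, v) = b →
      (v ∈ B1 ∨ v ∈ A2 ∨ v = z) := by
    intro u hu v hcb'
    rcases hcov v with h | h | h | h | h | h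
    · exact absurd (by rwa [Sym2.eq_swap] at hcb') (nA1B1 v h u hu)
    · exact Or.inr (Or.inl h)
    · exact Or.inl h
    · exact absurd hcb' (nB12 u hu v h)
    · exact absurd hcb' (nB1Z u hu v h)
    · exact Or.inr (Or.inr h)
  have nbrB2 : ∀ u ∈ B2, ∀ v : Fin (9*n), c s(u, v) = b →
      (v ∈ B2 ∨ v ∈ A1 ∨ v = z) := by
    intro u hu v hcb'
    rcases hcov v with h | h | h | h | h | h
    · exact Or.inr (Or.inl h)
    · exact absurd (by rwa [Sym2.eq_swap] at hcb') (nA2B2 v h u hu)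
    · exact absurd (by rwa [Sym2.eq_swap] at hcb') (nB12 v h u hu)
    · exact Or.inl h
    · exact absurd hcb' (nB2Z u hu v h)
    · exact Or.inr (Or.inr h)
  -- triangle classification
  have zone3 : ∀ u v x : Fin (9*n),
      c s(u,v) = b → c s(u,x) = b → c s(v,x) = b →
      (((u ∈ A1 ∨ u ∈ A2 ∨ u ∈ Z ∨ u = z) ∧ (v ∈ A1 ∨ v ∈ A2 ∨ v ∈ Z ∨ v = z) ∧
        (x ∈ A1 ∨ x ∈ A2 ∨ x ∈ Z ∨ x = z)) ∨
       ((u ∈ B1 ∨ u ∈ A2 ∨ u = z) ∧ (v ∈ B1 ∨ v ∈ A2 ∨ v = z) ∧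
        (x ∈ B1 ∨ x ∈ A2 ∨ x = z)) ∨
       ((u ∈ B2 ∨ u ∈ A1 ∨ u = z) ∧ (v ∈ B2 ∨ v ∈ A1 ∨ v = z) ∧
        (x ∈ B2 ∨ x ∈ A1 ∨ x = z))) := by
    intro u v x e1 e2 e3
    have e1' : c s(v,u) = b := by rwa [Sym2.eq_swap] at e1
    have e2' : c s(x,u) = b := by rwa [Sym2.eq_swap] at e2
    have e3' : c s(x,v) = b := by rwa [Sym2.eq_swap] at e3
    by_cases hu1 : u ∈ B1
    · exact Or.inr (Or.inl ⟨Or.inl hu1, nbrB1 u hu1 v e1, nbrB1 u hu1 x e2⟩)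
    by_cases hv1 : v ∈ B1
    · exact Or.inr (Or.inl ⟨nbrB1 v hv1 u e1', Or.inl hv1, nbrB1 v hv1 x e3⟩)
    by_cases hx1 : x ∈ B1
    · exact Or.inr (Or.inl ⟨nbrB1 x hx1 u e2', nbrB1 x hx1 v e3', Or.inl hx1⟩)
    by_cases hu2 : u ∈ B2
    · exact Or.inr (Or.inr ⟨Or.inl hu2, nbrB2 u hu2 v e1, nbrB2 u hu2 x e2⟩)
    by_cases hv2 : v ∈ B2
    · exact Or.inr (Or.inr ⟨nbrB2 v hv2 u e1', Or.inl hv2, nbrB2 v hv2 x e3⟩)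
    by_cases hx2 : x ∈ B2
    · exact Or.inr (Or.inr ⟨nbrB2 x hx2 u e2', nbrB2 x hx2 v e3', Or.inl hx2⟩)
    · left
      have q : ∀ y : Fin (9*n), y ∉ B1 → y ∉ B2 →
          (y ∈ A1 ∨ y ∈ A2 ∨ y ∈ Z ∨ y = z) := by
        intro y h1 h2
        rcases hcov y with h|h|h|h|h|h
        exacts [Or.inl h, Or.inr (Or.inl h), absurd h h1, absurd h h2,
          Or.inr (Or.inr (Or.inl h)), Or.inr (Or.inr (Or.inr h))]
      exact ⟨q u hu1 hu2, q v hv1 hv2, q x hx1 hx2⟩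
  have tri : ∀ m, m + 2 < 3*n+2 →
      (((w m ∈ A1 ∨ w m ∈ A2 ∨ w m ∈ Z ∨ w m = z) ∧
        (w (m+1) ∈ A1 ∨ w (m+1) ∈ A2 ∨ w (m+1) ∈ Z ∨ w (m+1) = z) ∧
        (w (m+2) ∈ A1 ∨ w (m+2) ∈ A2 ∨ w (m+2) ∈ Z ∨ w (m+2) = z)) ∨
       ((w m ∈ B1 ∨ w m ∈ A2 ∨ w m = z) ∧
        (w (m+1) ∈ B1 ∨ w (m+1) ∈ A2 ∨ w (m+1) = z) ∧
        (w (m+2) ∈ B1 ∨ w (m+2) ∈ A2 ∨ w (m+2) = z)) ∨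
       ((w m ∈ B2 ∨ w m ∈ A1 ∨ w m = z) ∧
        (w (m+1) ∈ B2 ∨ w (m+1) ∈ A1 ∨ w (m+1) = z) ∧
        (w (m+2) ∈ B2 ∨ w (m+2) ∈ A1 ∨ w (m+2) = z))) := by
    intro m hm
    exact zone3 (w m) (w (m+1)) (w (m+2))
      (hcb m (m+1) (by omega) (by omega) (by omega))
      (hcb m (m+2) (by omega) (by omega) (by omega))
      (hcb (m+1) (m+2) (by omega) (by omega) (by omega))
  -- propagation
  have prop : ∀ (pa : Fin (9*n) → Prop),
      (∀ m, m + 3 < 3*n+2 → pa (w (m+1)) → pa (w (m+2)) → pa (w (m+3))) →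
      pa (w 0) → pa (w 1) → pa (w 2) → ∀ i, i < 3*n+2 → pa (w i) := by
    intro pa hstep h0 h1 h2
    have main : ∀ i, i + 2 < 3*n+2 → pa (w i) ∧ pa (w (i+1)) ∧ pa (w (i+2)) := by
      intro i
      induction i with
      | zero => exact fun _ => ⟨h0, h1, h2⟩
      | succ m ih =>
        intro hm
        obtain ⟨-, k1, k2⟩ := ih (by omega)
        exact ⟨k1, k2, hstep m (by omega) k1 k2⟩
    intro i hi
    by_cases h' : i + 2 < 3*n+2
    · exact (main i h').1
    · obtain ⟨m1, m2, m3⟩ := main (3*n-1) (by omega)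
      have e1 : 3*n - 1 + 1 = 3*n := by omega
      have e2 : 3*n - 1 + 2 = 3*n + 1 := by omega
      rw [e1] at m2; rw [e2] at m3
      have : i = 3*n ∨ i = 3*n+1 := by omega
      rcases this with rfl | rfl
      · exact m2
      · exact m3
  -- counting in a B-zone
  have zoneB : ∀ (Bs As : Finset (Fin (9*n))), Bs.card = 2*n →
      (∀ u v : Fin (9*n), (u ∈ As ∨ u = z) → (v ∈ As ∨ v = z) → u ≠ v →
        c s(u,v) ≠ b) →
      (∀ i, i < 3*n+2 → (w i ∈ Bs ∨ w i ∈ As ∨ w i = z)) → False := by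
    intro Bs As hBs noe hall
    set S : Finset ℕ := (Finset.range (3*n+2)).filter (fun i => w i ∈ As ∨ w i = z)
      with hSdef
    have hmemS : ∀ i, i ∈ S ↔ (i < 3*n+2 ∧ (w i ∈ As ∨ w i = z)) := by
      intro i; simp [hSdef, Finset.mem_filter, Finset.mem_range]
    have hgap : ∀ i ∈ S, ∀ j ∈ S, i < j → i + 3 ≤ j := by
      intro i hi j hj hij
      by_contra hcon
      rw [hmemS] at hi hj
      exact noe (w i) (w j) hi.2 hj.2 (wne i j (by omega) (by omega) (by omega))
        (hcb i j hij (by omega) hj.1)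
    have hScard : S.card ≤ n + 1 := by
      have hmap : ∀ i ∈ S, i / 3 ∈ Finset.range (n+1) := by
        intro i hi; rw [hmemS] at hi; rw [Finset.mem_range]; omega
      have h' : S.card ≤ (Finset.range (n+1)).card := by
        refine Finset.card_le_card_of_injOn (fun i => i / 3) hmap ?_
        intro i hi j hj hij
        simp only [Finset.mem_coe] at hi hj
        rcases lt_trichotomy i j with h | h | h
        · have := hgap i hi j hj h; simp only at hij; omega
        · exact h
        · have := hgap j hj i hi h; simp only at hij; omega
      simpa using h'
    have hsub : S ⊆ Finset.range (3*n+2) := Finset.filter_subset _ _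
    have hT : (Finset.range (3*n+2) \ S).card = 3*n+2 - S.card := by
      rw [Finset.card_sdiff_of_subset hsub, Finset.card_range]
    have hTB : ∀ i ∈ Finset.range (3*n+2) \ S, w i ∈ Bs := by
      intro i hi
      rw [Finset.mem_sdiff, Finset.mem_range] at hi
      obtain ⟨hi1, hi2⟩ := hi
      rcases hall i hi1 with h | h | h
      · exact h
      · exact absurd ((hmemS i).mpr ⟨hi1, Or.inl h⟩) hi2
      · exact absurd ((hmemS i).mpr ⟨hi1, Or.inr h⟩) hi2
    have hle : (Finset.range (3*n+2) \ S).card ≤ Bs.card := by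
      refine Finset.card_le_card_of_injOn w hTB ?_
      intro i hi j hj hij
      simp only [Finset.mem_coe, Finset.mem_sdiff, Finset.mem_range] at hi hj
      exact winj i j hi.1 hj.1 hij
    omega
  -- counting in the A-zone
  have hinsn : (insert z Z).card = n := by
    rw [Finset.card_insert_of_notMem dZz, hZ]; omega
  have zoneA : (∀ i, i < 3*n+2 →
      (w i ∈ A1 ∨ w i ∈ A2 ∨ w i ∈ Z ∨ w i = z)) → False := by
    intro hall
    set S : Finset ℕ := (Finset.range (3*n+2)).filter (fun i => w i ∈ Z ∨ w i = z)
      with hSdef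
    have hmemS : ∀ i, i ∈ S ↔ (i < 3*n+2 ∧ (w i ∈ Z ∨ w i = z)) := by
      intro i; simp [hSdef, Finset.mem_filter, Finset.mem_range]
    have hSA : ∀ i, i < 3*n+2 → i ∉ S → (w i ∈ A1 ∨ w i ∈ A2) := by
      intro i hi hiS
      rcases hall i hi with h | h | h | h
      · exact Or.inl h
      · exact Or.inr h
      · exact absurd ((hmemS i).mpr ⟨hi, Or.inl h⟩) hiS
      · exact absurd ((hmemS i).mpr ⟨hi, Or.inr h⟩) hiS
    have hinz : ∀ i ∈ S, w i ∈ insert z Z := by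
      intro i hi; rw [hmemS] at hi
      rcases hi.2 with h | h
      · exact Finset.mem_insert_of_mem h
      · rw [h]; exact Finset.mem_insert_self _ _
    have hwinjS : Set.InjOn w S := by
      intro i hi j hj hij
      rw [Finset.mem_coe, hmemS] at hi hj
      exact winj i j hi.1 hj.1 hij
    have hScard : S.card ≤ n := by
      have := Finset.card_le_card_of_injOn w hinz hwinjS
      omega
    have block : ∀ m, m + 2 < 3*n+2 → ∃ i, i ∈ S ∧ m ≤ i ∧ i ≤ m + 2 := by
      intro m hm
      by_contra hcon
      have hno : ∀ i, m ≤ i → i ≤ m+2 → i ∉ S := fun i h1 h2 hiS => hcon ⟨i, hiS, h1, h2⟩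
      have g0 := hSA m (by omega) (hno m (by omega) (by omega))
      have g1 := hSA (m+1) (by omega) (hno (m+1) (by omega) (by omega))
      have g2 := hSA (m+2) (by omega) (hno (m+2) (by omega) (by omega))
      have e01 := hcb m (m+1) (by omega) (by omega) (by omega)
      have e02 := hcb m (m+2) (by omega) (by omega) (by omega)
      have e12 := hcb (m+1) (m+2) (by omega) (by omega) (by omega)
      have ne01 := wne m (m+1) (by omega) (by omega) (by omega)
      have ne02 := wne m (m+2) (by omega) (by omega) (by omega)
      have ne12 := wne (m+1) (m+2) (by omega) (by omega) (by omega)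
      rcases g0 with h0 | h0 <;> rcases g1 with h1 | h1 <;> rcases g2 with h2 | h2
      · exact nA1 _ h0 _ h1 ne01 e01
      · exact nA1 _ h0 _ h1 ne01 e01
      · exact nA1 _ h0 _ h2 ne02 e02
      · exact nA2 _ h1 _ h2 ne12 e12
      · exact nA1 _ h1 _ h2 ne12 e12
      · exact nA2 _ h0 _ h2 ne02 e02
      · exact nA2 _ h0 _ h1 ne01 e01
      · exact nA2 _ h0 _ h1 ne01 e01
    have hblock' : ∀ j, ∃ i, j < n → (i ∈ S ∧ 3*j ≤ i ∧ i ≤ 3*j + 2) := by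
      intro j
      by_cases hj : j < n
      · obtain ⟨i, hi⟩ := block (3*j) (by omega)
        exact ⟨i, fun _ => hi⟩
      · exact ⟨0, fun h => absurd h hj⟩
    choose g hg using hblock'
    have hgS : ∀ j, j < n → g j ∈ S := fun j hj => (hg j hj).1
    have hgb : ∀ j, j < n → 3*j ≤ g j ∧ g j ≤ 3*j+2 :=
      fun j hj => ⟨(hg j hj).2.1, (hg j hj).2.2⟩
    have himg : (Finset.range n).image g ⊆ S := by
      intro x hx
      obtain ⟨j, hj, rfl⟩ := Finset.mem_image.mp hx
      exact hgS j (Finset.mem_range.mp hj)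
    have hginj : Set.InjOn g (Finset.range n) := by
      intro i hi j hj hij
      simp only [Finset.coe_range, Set.mem_Iio] at hi hj
      have b1 := hgb i hi
      have b2 := hgb j hj
      omega
    have hcard2 : n ≤ S.card := by
      have := Finset.card_le_card himg
      rwa [Finset.card_image_of_injOn hginj, Finset.card_range] at this
    have hSeq : (Finset.range n).image g = S :=
      Finset.eq_of_subset_of_card_le himg
        (by rw [Finset.card_image_of_injOn hginj, Finset.card_range]; exact hScard)
    have hmemS2 : ∀ i, i ∈ S → ∃ j, j < n ∧ g j = i := by
      intro i hi
      rw [← hSeq] at hi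
      obtain ⟨j, hj, hji⟩ := Finset.mem_image.mp hi
      exact ⟨j, Finset.mem_range.mp hj, hji⟩
    have gval : ∀ d j, j + d + 1 = n → g j = 3*j + 2 := by
      intro d
      induction d with
      | zero =>
        intro j hj
        obtain ⟨i, hiS, hi1, hi2⟩ := block (3*j + 2) (by omega)
        obtain ⟨j', hj', hgj'⟩ := hmemS2 i hiS
        have bb := hgb j' hj'
        have hjj : j' = j := by omega
        subst hjj
        omega
      | succ d ih =>
        intro j hj
        have h1 := ih (j+1) (by omega)
        obtain ⟨i, hiS, hi1, hi2⟩ := block (3*j + 2) (by omega)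
        obtain ⟨j', hj', hgj'⟩ := hmemS2 i hiS
        have bb := hgb j' hj'
        have hjj : j' = j ∨ j' = j + 1 := by omega
        rcases hjj with rfl | rfl
        · omega
        · omega
    have hScardEq : S.card = n := le_antisymm hScard hcard2
    have himgW : S.image w = insert z Z := by
      apply Finset.eq_of_subset_of_card_le
      · intro x hx
        obtain ⟨i, hi, rfl⟩ := Finset.mem_image.mp hx
        exact hinz i hi
      · rw [Finset.card_image_of_injOn hwinjS, hScardEq, hinsn]
    have hz : z ∈ S.image w := himgW ▸ Finset.mem_insert_self z Z
    obtain ⟨s, hsS, hws⟩ := Finset.mem_image.mp hz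
    obtain ⟨j, hj, hgj⟩ := hmemS2 s hsS
    have hgv := gval (n - j - 1) j (by omega)
    have hs : s = 3*j + 2 := by omega
    have hnb : (3*j + 1) ∉ S := by
      intro hmem
      obtain ⟨j', hj', hgj'⟩ := hmemS2 _ hmem
      have bb := hgb j' hj'
      have hgv' := gval (n - j' - 1) j' (by omega)
      omega
    have hA := hSA (3*j+1) (by omega) hnb
    have he : c s(w (3*j+1), w (3*j+2)) = b :=
      hcb _ _ (by omega) (by omega) (by omega)
    have hwz : w (3*j+2) = z := by rw [← hs]; exact hws
    rw [hwz] at he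
    have he' : c s(z, w (3*j+1)) = b := by rwa [Sym2.eq_swap] at he
    rcases hA with h | h
    · exact nzA1 _ h he'
    · exact nzA2 _ h he'
  -- steps per zone
  have step0 : ∀ m, m + 3 < 3*n+2 →
      (w (m+1) ∈ A1 ∨ w (m+1) ∈ A2 ∨ w (m+1) ∈ Z ∨ w (m+1) = z) →
      (w (m+2) ∈ A1 ∨ w (m+2) ∈ A2 ∨ w (m+2) ∈ Z ∨ w (m+2) = z) →
      (w (m+3) ∈ A1 ∨ w (m+3) ∈ A2 ∨ w (m+3) ∈ Z ∨ w (m+3) = z) := by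
    intro m hm h1 h2
    have hne := wne (m+1) (m+2) (by omega) (by omega) (by omega)
    have he := hcb (m+1) (m+2) (by omega) (by omega) (by omega)
    rcases tri (m+1) (by omega) with ⟨q1,q2,q3⟩ | ⟨q1,q2,q3⟩ | ⟨q1,q2,q3⟩
    · exact q3
    · exact (ex01 _ _ hne he h1 h2 q1 q2).elim
    · exact (ex02 _ _ hne he h1 h2 q1 q2).elim
  have step1 : ∀ m, m + 3 < 3*n+2 →
      (w (m+1) ∈ B1 ∨ w (m+1) ∈ A2 ∨ w (m+1) = z) →
      (w (m+2) ∈ B1 ∨ w (m+2) ∈ A2 ∨ w (m+2) = z) →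
      (w (m+3) ∈ B1 ∨ w (m+3) ∈ A2 ∨ w (m+3) = z) := by
    intro m hm h1 h2
    have hne := wne (m+1) (m+2) (by omega) (by omega) (by omega)
    have he := hcb (m+1) (m+2) (by omega) (by omega) (by omega)
    rcases tri (m+1) (by omega) with ⟨q1,q2,q3⟩ | ⟨q1,q2,q3⟩ | ⟨q1,q2,q3⟩
    · exact (ex01 _ _ hne he q1 q2 h1 h2).elim
    · exact q3
    · exact (ex12 _ _ hne he h1 h2 q1 q2).elim
  have step2 : ∀ m, m + 3 < 3*n+2 →
      (w (m+1) ∈ B2 ∨ w (m+1) ∈ A1 ∨ w (m+1) = z) →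
      (w (m+2) ∈ B2 ∨ w (m+2) ∈ A1 ∨ w (m+2) = z) →
      (w (m+3) ∈ B2 ∨ w (m+3) ∈ A1 ∨ w (m+3) = z) := by
    intro m hm h1 h2
    have hne := wne (m+1) (m+2) (by omega) (by omega) (by omega)
    have he := hcb (m+1) (m+2) (by omega) (by omega) (by omega)
    rcases tri (m+1) (by omega) with ⟨q1,q2,q3⟩ | ⟨q1,q2,q3⟩ | ⟨q1,q2,q3⟩
    · exact (ex02 _ _ hne he q1 q2 h1 h2).elim
    · exact (ex12 _ _ hne he q1 q2 h1 h2).elim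
    · exact q3
  rcases tri 0 (by omega) with ⟨h0, h1, h2⟩ | ⟨h0, h1, h2⟩ | ⟨h0, h1, h2⟩
  · exact zoneA (prop (fun x => x ∈ A1 ∨ x ∈ A2 ∨ x ∈ Z ∨ x = z) step0 h0 h1 h2)
  · exact zoneB B1 A2 hB1 noeA2z (prop (fun x => x ∈ B1 ∨ x ∈ A2 ∨ x = z) step1 h0 h1 h2)
  · exact zoneB B2 A1 hB2 noeA1z (prop (fun x => x ∈ B2 ∨ x ∈ A1 ∨ x = z) step2 h0 h1 h2)


/-- For every `n ≥ 2`, the explicit red/blue colouring of the complete graph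
on `9n` vertices described in the paper (with `|X₁| = |X₂| = |Y₁| = |Y₂| = 2n`,
`|Z| = n - 1`, one extra vertex `z`, and the edges inside `Z ∪ {z}` coloured arbitrarily)
contains no monochromatic copy of `P_{3n+2}²`.  Colours: `true` = red, `false` = blue. -/
theorem lower_bound_construction_P3n2 (n : ℕ) (hn : 2 ≤ n)
    (X1 X2 Y1 Y2 Z : Finset (Fin (9 * n))) (z : Fin (9 * n))
    (hdisj : ([X1, X2, Y1, Y2, Z, {z}] : List (Finset (Fin (9 * n)))).Pairwise Disjoint)
    (hcover : X1 ∪ X2 ∪ Y1 ∪ Y2 ∪ Z ∪ {z} = Finset.univ)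
    (hX1 : X1.card = 2 * n) (hX2 : X2.card = 2 * n)
    (hY1 : Y1.card = 2 * n) (hY2 : Y2.card = 2 * n)
    (hZ : Z.card = n - 1)
    (c : Sym2 (Fin (9 * n)) → Bool)
    (hX1in : ∀ u ∈ X1, ∀ v ∈ X1, u ≠ v → c s(u, v) = false)
    (hX2in : ∀ u ∈ X2, ∀ v ∈ X2, u ≠ v → c s(u, v) = false)
    (hY1in : ∀ u ∈ Y1, ∀ v ∈ Y1, u ≠ v → c s(u, v) = true)
    (hY2in : ∀ u ∈ Y2, ∀ v ∈ Y2, u ≠ v → c s(u, v) = true)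
    (hX1X2 : ∀ u ∈ X1, ∀ v ∈ X2, c s(u, v) = true)
    (hX1Z : ∀ u ∈ X1, ∀ v ∈ Z, c s(u, v) = true)
    (hX2Z : ∀ u ∈ X2, ∀ v ∈ Z, c s(u, v) = true)
    (hX1Y2 : ∀ u ∈ X1, ∀ v ∈ Y2, c s(u, v) = true)
    (hX2Y1 : ∀ u ∈ X2, ∀ v ∈ Y1, c s(u, v) = true)
    (hY1Y2 : ∀ u ∈ Y1, ∀ v ∈ Y2, c s(u, v) = false)
    (hY1Z : ∀ u ∈ Y1, ∀ v ∈ Z, c s(u, v) = false)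
    (hY2Z : ∀ u ∈ Y2, ∀ v ∈ Z, c s(u, v) = false)
    (hX1Y1 : ∀ u ∈ X1, ∀ v ∈ Y1, c s(u, v) = false)
    (hX2Y2 : ∀ u ∈ X2, ∀ v ∈ Y2, c s(u, v) = false)
    (hzX : ∀ v ∈ X1 ∪ X2, c s(z, v) = false)
    (hzY : ∀ v ∈ Y1 ∪ Y2, c s(z, v) = true) :
    ¬HasMonoCopy (pathSq (3 * n + 2)) c := by
  rintro ⟨b, f, hf⟩
  obtain ⟨h1, hdisj⟩ := List.pairwise_cons.mp hdisj
  obtain ⟨h2, hdisj⟩ := List.pairwise_cons.mp hdisj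
  obtain ⟨h3, hdisj⟩ := List.pairwise_cons.mp hdisj
  obtain ⟨h4, hdisj⟩ := List.pairwise_cons.mp hdisj
  obtain ⟨h5, -⟩ := List.pairwise_cons.mp hdisj
  have dX1X2 : Disjoint X1 X2 := h1 X2 (by simp)
  have dX1Y1 : Disjoint X1 Y1 := h1 Y1 (by simp)
  have dX1Y2 : Disjoint X1 Y2 := h1 Y2 (by simp)
  have dX1Z : Disjoint X1 Z := h1 Z (by simp)
  have dX2Y1 : Disjoint X2 Y1 := h2 Y1 (by simp)
  have dX2Y2 : Disjoint X2 Y2 := h2 Y2 (by simp)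
  have dX2Z : Disjoint X2 Z := h2 Z (by simp)
  have dY1Y2 : Disjoint Y1 Y2 := h3 Y2 (by simp)
  have dY1Z : Disjoint Y1 Z := h3 Z (by simp)
  have dY2Z : Disjoint Y2 Z := h4 Z (by simp)
  have dZz : z ∉ Z := by
    have hd : Disjoint Z ({z} : Finset (Fin (9*n))) := h5 {z} (by simp)
    simpa [Finset.disjoint_singleton_right] using hd
  have hcov : ∀ x : Fin (9*n), x ∈ X1 ∨ x ∈ X2 ∨ x ∈ Y1 ∨ x ∈ Y2 ∨ x ∈ Z ∨ x = z := by
    intro x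
    have hx : x ∈ X1 ∪ X2 ∪ Y1 ∪ Y2 ∪ Z ∪ {z} := hcover ▸ Finset.mem_univ x
    simp [Finset.mem_union, Finset.mem_singleton, or_assoc] at hx; tauto
  have hpos : 0 < 3*n + 2 := by omega
  have winj : ∀ i j, i < 3*n+2 → j < 3*n+2 →
      f ⟨i % (3*n+2), Nat.mod_lt i hpos⟩ = f ⟨j % (3*n+2), Nat.mod_lt j hpos⟩ → i = j := by
    intro i j hi hj h
    have h2' := f.injective h
    have h3' : i % (3*n+2) = j % (3*n+2) := congrArg Fin.val h2'
    rwa [Nat.mod_eq_of_lt hi, Nat.mod_eq_of_lt hj] at h3'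
  have hcb : ∀ i j, i < j → j ≤ i + 2 → j < 3*n+2 →
      c s(f ⟨i % (3*n+2), Nat.mod_lt i hpos⟩, f ⟨j % (3*n+2), Nat.mod_lt j hpos⟩) = b := by
    intro i j hij hj2 hj
    apply hf
    refine ⟨?_, ?_, ?_⟩
    · simp only [ne_eq, Fin.mk.injEq]
      rw [Nat.mod_eq_of_lt (show i < 3*n+2 by omega), Nat.mod_eq_of_lt hj]
      omega
    · show i % (3*n+2) ≤ j % (3*n+2) + 2
      rw [Nat.mod_eq_of_lt (show i < 3*n+2 by omega), Nat.mod_eq_of_lt hj]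
      omega
    · show j % (3*n+2) ≤ i % (3*n+2) + 2
      rw [Nat.mod_eq_of_lt (show i < 3*n+2 by omega), Nat.mod_eq_of_lt hj]
      omega
  cases b with
  | true =>
    refine core_P3n2 n hn X1 X2 Y1 Y2 Z z dX1X2 dX1Y1 dX2Y2 dY1Y2 dY1Z dY2Z dZz
      hY1 hY2 hZ hcov c true ?_ ?_ ?_ ?_ ?_ ?_ ?_ ?_ ?_
      (fun i => f ⟨i % (3*n+2), Nat.mod_lt i hpos⟩) winj hcb
    · intro u hu v hv hne; simp [hX1in u hu v hv hne]
    · intro u hu v hv hne; simp [hX2in u hu v hv hne]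
    · intro u hu v hv; simp [hY1Y2 u hu v hv]
    · intro u hu v hv; simp [hY1Z u hu v hv]
    · intro u hu v hv; simp [hY2Z u hu v hv]
    · intro u hu v hv; simp [hX1Y1 u hu v hv]
    · intro u hu v hv; simp [hX2Y2 u hu v hv]
    · intro v hv; simp [hzX v (Finset.mem_union_left _ hv)]
    · intro v hv; simp [hzX v (Finset.mem_union_right _ hv)]
  | false =>
    refine core_P3n2 n hn Y1 Y2 X2 X1 Z z dY1Y2 dX2Y1.symm dX1Y2.symm dX1X2.symm dX2Z dX1Z dZz
      hX2 hX1 hZ (fun x => by have := hcov x; tauto) c false ?_ ?_ ?_ ?_ ?_ ?_ ?_ ?_ ?_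
      (fun i => f ⟨i % (3*n+2), Nat.mod_lt i hpos⟩) winj hcb
    · intro u hu v hv hne; simp [hY1in u hu v hv hne]
    · intro u hu v hv hne; simp [hY2in u hu v hv hne]
    · intro u hu v hv; rw [Sym2.eq_swap]; simp [hX1X2 v hv u hu]
    · intro u hu v hv; simp [hX2Z u hu v hv]
    · intro u hu v hv; simp [hX1Z u hu v hv]
    · intro u hu v hv; rw [Sym2.eq_swap]; simp [hX2Y1 v hv u hu]
    · intro u hu v hv; rw [Sym2.eq_swap]; simp [hX1Y2 v hv u hu]
    · intro v hv; simp [hzY v (Finset.mem_union_left _ hv)]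
    · intro v hv; simp [hzY v (Finset.mem_union_right _ hv)]
end

section
/- Let k be a positive integer and let b_1 ≥ b_2 ≥ … ≥ b_k > 0 be positive reals such that Σ_{i>1} b_i > b_1. Then {1,…,k} can be partitioned into two sets A and B such that, writing α = Σ_{i∈A} b_i and β = Σ_{i∈B} b_i, one has 2α ≥ β ≥ α. -/
/-- If `b₁ ≥ … ≥ b_k > 0` and `∑_{i>1} bᵢ > b₁`, then the index set can
be split into `A` and `B` with `2·∑_A b ≥ ∑_B b ≥ ∑_A b`. -/
theorem balanced_partition_of_reals (k : ℕ) (hk : 0 < k) (b : Fin k → ℝ)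
    (hpos : ∀ i, 0 < b i)
    (hmono : ∀ i j : Fin k, i ≤ j → b j ≤ b i)
    (hsum : b ⟨0, hk⟩ < ∑ i ∈ Finset.univ.erase ⟨0, hk⟩, b i) :
    ∃ A B : Finset (Fin k), Disjoint A B ∧ A ∪ B = Finset.univ ∧
      (∑ i ∈ A, b i) ≤ (∑ i ∈ B, b i) ∧ (∑ i ∈ B, b i) ≤ 2 * (∑ i ∈ A, b i) := by
  classical
  set S := ∑ i, b i with hS
  obtain ⟨A₀, -, hmin₀⟩ := Finset.exists_min_image (Finset.univ : Finset (Finset (Fin k)))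
    (fun A => |S - 2 * ∑ i ∈ A, b i|) ⟨∅, Finset.mem_univ _⟩
  have hcompl : ∀ A : Finset (Fin k), ∑ i ∈ Aᶜ, b i = S - ∑ i ∈ A, b i := by
    intro A
    have := Finset.sum_add_sum_compl A b
    rw [hS]; linarith
  obtain ⟨A, hA1, hA2⟩ : ∃ A : Finset (Fin k), (∑ i ∈ A, b i) ≤ (∑ i ∈ Aᶜ, b i) ∧
      ∀ A' : Finset (Fin k), |S - 2 * ∑ i ∈ A, b i| ≤ |S - 2 * ∑ i ∈ A', b i| := by
    rcases le_total (∑ i ∈ A₀, b i) (∑ i ∈ A₀ᶜ, b i) with h | h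
    · exact ⟨A₀, h, fun A' => hmin₀ A' (Finset.mem_univ _)⟩
    · refine ⟨A₀ᶜ, by rwa [compl_compl], fun A' => ?_⟩
      have heq : |S - 2 * ∑ i ∈ A₀ᶜ, b i| = |S - 2 * ∑ i ∈ A₀, b i| := by
        rw [hcompl, show S - 2 * (S - ∑ i ∈ A₀, b i) = -(S - 2 * ∑ i ∈ A₀, b i) by ring,
          abs_neg]
      rw [heq]; exact hmin₀ A' (Finset.mem_univ _)
  refine ⟨A, Aᶜ, disjoint_compl_right, Finset.union_compl A, hA1, ?_⟩
  by_contra hcon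
  push_neg at hcon
  set α := ∑ i ∈ A, b i with hα
  set β := ∑ i ∈ Aᶜ, b i with hβ
  have hαβ : α + β = S := by rw [hβ, hcompl]; ring
  have hα0 : 0 ≤ α := Finset.sum_nonneg fun i _ => (hpos i).le
  have key : ∀ j ∈ Aᶜ, β - α ≤ b j := by
    intro j hj
    have hj' : j ∉ A := Finset.mem_compl.mp hj
    have h2 := hA2 (insert j A)
    rw [Finset.sum_insert hj'] at h2
    have habs : |S - 2 * α| = β - α := by
      rw [show S - 2 * α = β - α by linarith, abs_of_nonneg (by linarith)]
    rw [habs] at h2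
    rcases le_abs.mp h2 with h | h
    · nlinarith [hpos j]
    · nlinarith
  set z : Fin k := ⟨0, hk⟩ with hz
  have hbmax : ∀ j : Fin k, b j ≤ b z := fun j => hmono z j (by simp [hz, Fin.le_def])
  have hBne : Aᶜ.Nonempty := by
    rw [Finset.nonempty_iff_ne_empty]
    intro h
    rw [hβ, h, Finset.sum_empty] at hcon
    linarith
  have haA : ∀ a ∈ A, b a ≤ α :=
    fun a ha => Finset.single_le_sum (fun i _ => (hpos i).le) ha
  have hzB : z ∈ Aᶜ := by
    by_contra hzA
    rw [Finset.mem_compl, not_not] at hzA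
    obtain ⟨j, hj⟩ := hBne
    have := key j hj
    have := hbmax j
    have := haA z hzA
    linarith
  by_cases hB : ∃ j ∈ Aᶜ, j ≠ z
  · obtain ⟨j, hjB, hjz⟩ := hB
    have hsub : ({z, j} : Finset (Fin k)) ⊆ Aᶜ := by
      intro x hx
      rcases Finset.mem_insert.mp hx with rfl | hx
      · exact hzB
      · rw [Finset.mem_singleton] at hx; subst hx; exact hjB
    have hβge : b z + b j ≤ β := by
      have := Finset.sum_le_sum_of_subset_of_nonneg hsub
        (fun i _ _ => (hpos i).le)
      rwa [Finset.sum_insert (by simpa using (Ne.symm hjz)), Finset.sum_singleton] at this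
    have h1 := key j hjB
    have h2 := hbmax j
    linarith
  · push_neg at hB
    have hAc : Aᶜ = {z} := by
      apply Finset.eq_singleton_iff_unique_mem.mpr
      exact ⟨hzB, hB⟩
    have hβz : β = b z := by rw [hβ, hAc, Finset.sum_singleton]
    have herase : ∑ i ∈ Finset.univ.erase z, b i = S - b z := by
      have := Finset.sum_erase_add Finset.univ b (Finset.mem_univ z)
      rw [hS]; linarith
    rw [herase] at hsum
    linarith
end
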